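/- Let 𝔤 be a finite-dimensional complex semisimple Lie algebra with Cartan subalgebra 𝔥, and W a finite-dimensional 𝔤-module. Let λ : 𝔥 → ℂ be a weight of W, with weight space W_λ = {w ∈ W : h·w = λ(h)w for all h ∈ 𝔥}. If there exists a root α of (𝔤,𝔥) whose coroot H_α satisfies that λ(H_α) is a nonzero even integer, then W_λ ⊗ 𝔥 is contained in the Lie submodule of W ⊗ 𝔤 generated by the 𝔤-overshears. -/

import Mathlib

open TensorProduct LieModule

namespace OvershearAux

variable {𝔤 : Type} [LieRing 𝔤] [LieAlgebra ℂ 𝔤]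
variable {W : Type} [AddCommGroup W] [Module ℂ W] [LieRingModule 𝔤 W] [LieModule ℂ 𝔤 W]
variable {h e f : 𝔤}

local notation "ψ" P:max p:max => ((toEnd ℂ 𝔤 W f) ^ p) P

lemma lie_f_tmul_e (t : IsSl2Triple h e f) (u : W) :
    ⁅f, u ⊗ₜ[ℂ] e⁆ = ⁅f, u⁆ ⊗ₜ[ℂ] e - u ⊗ₜ[ℂ] h := by
  rw [lie_tmul_right, ← t.lie_e_f, ← lie_skew e f, tmul_neg]; abel

lemma lie_f_tmul_h (t : IsSl2Triple h e f) (u : W) :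
    ⁅f, u ⊗ₜ[ℂ] h⁆ = ⁅f, u⁆ ⊗ₜ[ℂ] h + (2:ℂ) • (u ⊗ₜ[ℂ] f) := by
  have hfh : ⁅f, h⁆ = (2:ℂ) • f := by
    rw [← lie_skew, t.lie_lie_smul_f (R := ℂ), neg_neg]
  rw [lie_tmul_right, hfh, tmul_smul]

lemma lie_f_tmul_f (u : W) :
    ⁅f, u ⊗ₜ[ℂ] f⁆ = ⁅f, u⁆ ⊗ₜ[ℂ] f := by
  rw [lie_tmul_right, lie_self, tmul_zero, add_zero]

variable (S : LieSubmodule ℂ 𝔤 (W ⊗[ℂ] 𝔤))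
  (hS : ∀ (u : W) (x : 𝔤), ⁅x, ⁅x, u⁆⁆ = (0:W) → u ⊗ₜ[ℂ] x ∈ S)

section Chains

variable {v : W} {μ : ℂ} {t : IsSl2Triple h e f} (P : t.HasPrimitiveVectorWith v μ)
include hS P

/-- The basic chain: `F^j` applied to elements of the form
`ψ2⊗e - (b+1)•ψ1⊗h - (b+1)b•ψ0⊗f`. -/
lemma chainA (b : ℂ)
    (base : (ψ v 2) ⊗ₜ[ℂ] e - (b+1) • ((ψ v 1) ⊗ₜ[ℂ] h) - ((b+1)*b) • (v ⊗ₜ[ℂ] f) ∈ S) :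
    ∀ j : ℕ, (ψ v (j+2)) ⊗ₜ[ℂ] e - ((j:ℂ)+b+1) • ((ψ v (j+1)) ⊗ₜ[ℂ] h)
      - (((j:ℂ)+b+1)*((j:ℂ)+b)) • ((ψ v j) ⊗ₜ[ℂ] f) ∈ S := by
  intro j
  induction j with
  | zero => simpa using base
  | succ j ih =>
    have key : (ψ v (j+3)) ⊗ₜ[ℂ] e - (((j:ℂ)+1)+b+1) • ((ψ v (j+2)) ⊗ₜ[ℂ] h)
        - ((((j:ℂ)+1)+b+1)*(((j:ℂ)+1)+b)) • ((ψ v (j+1)) ⊗ₜ[ℂ] f)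
        = ⁅f, (ψ v (j+2)) ⊗ₜ[ℂ] e - ((j:ℂ)+b+1) • ((ψ v (j+1)) ⊗ₜ[ℂ] h)
      - (((j:ℂ)+b+1)*((j:ℂ)+b)) • ((ψ v j) ⊗ₜ[ℂ] f)⁆ := by
      rw [lie_sub, lie_sub, lie_smul, lie_smul, lie_f_tmul_e t, lie_f_tmul_h t, lie_f_tmul_f,
        P.lie_f_pow_toEnd_f, P.lie_f_pow_toEnd_f, P.lie_f_pow_toEnd_f]
      module
    have := S.lie_mem (x := f) ih
    rw [← key] at this
    simpa using this
  

/-- The difference of the two `chainA` chains (`b=0` minus `b=1`):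
`ψ(j+1)⊗h + 2(j+1)•ψj⊗f ∈ S`, valid for every `j`. -/
lemma chainV
    (hx0 : v ⊗ₜ[ℂ] e ∈ S) (hx1 : (ψ v 1) ⊗ₜ[ℂ] e ∈ S) :
    ∀ j : ℕ, (ψ v (j+1)) ⊗ₜ[ℂ] h + (2*((j:ℂ)+1)) • ((ψ v j) ⊗ₜ[ℂ] f) ∈ S := by
  have base0 : (ψ v 2) ⊗ₜ[ℂ] e - ((0:ℂ)+1) • ((ψ v 1) ⊗ₜ[ℂ] h)
      - (((0:ℂ)+1)*(0:ℂ)) • (v ⊗ₜ[ℂ] f) ∈ S := by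
    have := S.lie_mem (x := f) hx1
    rw [lie_f_tmul_e t, P.lie_f_pow_toEnd_f] at this
    convert (show _ ∈ S from this) using 1
    module
  have base1 : (ψ v 2) ⊗ₜ[ℂ] e - ((1:ℂ)+1) • ((ψ v 1) ⊗ₜ[ℂ] h)
      - (((1:ℂ)+1)*(1:ℂ)) • (v ⊗ₜ[ℂ] f) ∈ S := by
    have h1 := S.lie_mem (x := f) (S.lie_mem (x := f) hx0)
    rw [lie_f_tmul_e t] at h1
    rw [lie_sub, lie_f_tmul_e t, lie_f_tmul_h t] at h1
    have hv0 : ⁅f, v⁆ = ψ v 1 := by simp [toEnd_apply_apply]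
    rw [hv0, P.lie_f_pow_toEnd_f] at h1
    convert (show _ ∈ S from h1) using 1
    module
  intro j
  have c0 := chainA S hS P 0 (by simpa using base0) j
  have c1 := chainA S hS P 1 (by simpa using base1) j
  have key : (ψ v (j+1)) ⊗ₜ[ℂ] h + (2*((j:ℂ)+1)) • ((ψ v j) ⊗ₜ[ℂ] f)
      = ((ψ v (j+2)) ⊗ₜ[ℂ] e - ((j:ℂ)+0+1) • ((ψ v (j+1)) ⊗ₜ[ℂ] h)
        - (((j:ℂ)+0+1)*((j:ℂ)+0)) • ((ψ v j) ⊗ₜ[ℂ] f))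
      - ((ψ v (j+2)) ⊗ₜ[ℂ] e - ((j:ℂ)+1+1) • ((ψ v (j+1)) ⊗ₜ[ℂ] h)
        - (((j:ℂ)+1+1)*((j:ℂ)+1)) • ((ψ v j) ⊗ₜ[ℂ] f)) := by
    module
  rw [key]
  exact sub_mem c0 c1

/-- The chain starting from the middle weight-zero vector `ψ m ⊗ h`. -/
lemma chainW {m : ℕ} (hmid : ⁅h, ψ v m⁆ = 0) :
    ∀ j : ℕ, (ψ v (m+j+1)) ⊗ₜ[ℂ] h + (2*((j:ℂ)+1)) • ((ψ v (m+j)) ⊗ₜ[ℂ] f) ∈ S := by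
  have hz : (ψ v m) ⊗ₜ[ℂ] h ∈ S := hS _ _ (by rw [hmid, lie_zero])
  intro j
  induction j with
  | zero =>
    have := S.lie_mem (x := f) hz
    rw [lie_f_tmul_h t, P.lie_f_pow_toEnd_f] at this
    simpa using this
  | succ j ih =>
    have := S.lie_mem (x := f) ih
    rw [lie_add, lie_smul, lie_f_tmul_h t, lie_f_tmul_f, P.lie_f_pow_toEnd_f,
      P.lie_f_pow_toEnd_f] at this
    have key : (ψ v (m+(j+1)+1)) ⊗ₜ[ℂ] h + (2*(((j:ℕ):ℂ)+1+1)) • ((ψ v (m+(j+1))) ⊗ₜ[ℂ] f)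
        = (ψ v (m+j+1+1)) ⊗ₜ[ℂ] h + (2:ℂ) • ((ψ v (m+j+1)) ⊗ₜ[ℂ] f)
          + (2*((j:ℂ)+1)) • ((ψ v (m+j+1)) ⊗ₜ[ℂ] f) := by
      have : m+(j+1) = m+j+1 := by omega
      rw [this]
      module
    rw [show ((j+1:ℕ):ℂ) = (j:ℂ)+1 by push_cast; ring, key]
    exact this

/-- Upper half: for `n = 2m`, `m ≠ 0`, all `ψ p ⊗ h` with `p ≥ m` lie in `S`,
and all `ψ p ⊗ f` with `p ≥ m` too. -/
lemma upperHalf {m : ℕ} (hm : m ≠ 0) (hμ : μ = 2*(m:ℂ))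
    (hx0 : v ⊗ₜ[ℂ] e ∈ S) (hx1 : (ψ v 1) ⊗ₜ[ℂ] e ∈ S) :
    (∀ j : ℕ, (ψ v (m+j)) ⊗ₜ[ℂ] f ∈ S) ∧ (∀ p : ℕ, m ≤ p → (ψ v p) ⊗ₜ[ℂ] h ∈ S) := by
  have hmid : ⁅h, ψ v m⁆ = 0 := by
    rw [P.lie_h_pow_toEnd_f, hμ]
    simp
  have hf : ∀ j : ℕ, (ψ v (m+j)) ⊗ₜ[ℂ] f ∈ S := by
    intro j
    have hV := chainV S hS P hx0 hx1 (m+j)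
    have hW := chainW S hS P hmid j
    have key : (2*(m:ℂ)) • ((ψ v (m+j)) ⊗ₜ[ℂ] f)
        = ((ψ v (m+j+1)) ⊗ₜ[ℂ] h + (2*(((m+j:ℕ):ℂ)+1)) • ((ψ v (m+j)) ⊗ₜ[ℂ] f))
        - ((ψ v (m+j+1)) ⊗ₜ[ℂ] h + (2*((j:ℂ)+1)) • ((ψ v (m+j)) ⊗ₜ[ℂ] f)) := by
      push_cast
      module
    have hmem : (2*(m:ℂ)) • ((ψ v (m+j)) ⊗ₜ[ℂ] f) ∈ S := key ▸ sub_mem hV hW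
    have h2m : (2*(m:ℂ)) ≠ 0 := by
      simp [Nat.cast_eq_zero, hm]
    have := S.smul_mem (2*(m:ℂ))⁻¹ hmem
    rwa [smul_smul, inv_mul_cancel₀ h2m, one_smul] at this
  refine ⟨hf, ?_⟩
  intro p hp
  rcases Nat.lt_or_ge p (m+1) with hlt | hge
  · have : p = m := by omega
    subst this
    exact hS _ _ (by rw [hmid, lie_zero])
  · obtain ⟨j, rfl⟩ : ∃ j, p = m+j+1 := ⟨p - m - 1, by omega⟩
    have hW := chainW S hS P hmid j
    have key : (ψ v (m+j+1)) ⊗ₜ[ℂ] h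
        = ((ψ v (m+j+1)) ⊗ₜ[ℂ] h + (2*((j:ℂ)+1)) • ((ψ v (m+j)) ⊗ₜ[ℂ] f))
          - (2*((j:ℂ)+1)) • ((ψ v (m+j)) ⊗ₜ[ℂ] f) := by module
    rw [key]
    exact sub_mem hW (S.smul_mem _ (hf j))

/-- `ψ p ⊗ h ∈ S` for all `p ≥ m`, where `μ = 2m`, `m ≠ 0`. -/
lemma upperH {m : ℕ} (hm : m ≠ 0) (hμ : μ = 2*(m:ℂ)) :
    ∀ p : ℕ, m ≤ p → (ψ v p) ⊗ₜ[ℂ] h ∈ S := by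
  have hx0 : v ⊗ₜ[ℂ] e ∈ S := hS _ _ (by rw [P.lie_e, lie_zero])
  have hx1 : (ψ v 1) ⊗ₜ[ℂ] e ∈ S := by
    refine hS _ _ ?_
    have h1 := P.lie_e_pow_succ_toEnd_f 0
    rw [show (0:ℕ)+1 = 1 from rfl] at h1
    rw [h1, lie_smul]
    simp only [pow_zero, Module.End.one_apply, P.lie_e, smul_zero]
  exact (upperHalf S hS P hm hμ hx0 hx1).2

/-- Powers of `e` applied to the bottom vector `ψ n` recover the `ψ (n-p)` up to a
nonzero scalar. -/
lemma epow_bottom {n : ℕ} (hn : μ = (n:ℂ)) :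
    ∀ p : ℕ, p ≤ n → ∃ γ : ℂ, γ ≠ 0 ∧
      ((toEnd ℂ 𝔤 W e)^p) (ψ v n) = γ • (ψ v (n-p)) := by
  intro p
  induction p with
  | zero => exact fun _ => ⟨1, one_ne_zero, by simp⟩
  | succ p ih =>
    intro hp
    obtain ⟨γ, hγ, hγ2⟩ := ih (by omega)
    have hsub : n - p = (n - p - 1) + 1 := by omega
    have hlie := P.lie_e_pow_succ_toEnd_f (n - p - 1)
    rw [← hsub] at hlie
    refine ⟨γ * ((((n-p-1):ℕ):ℂ)+1) * (μ - ((n-p-1):ℕ)), ?_, ?_⟩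
    · have h1 : ((((n-p-1):ℕ):ℂ)+1) ≠ 0 := by
        have := Nat.cast_add_one_ne_zero (R := ℂ) (n-p-1)
        simpa using this
      have h2 : (μ - ((n-p-1):ℕ)) ≠ 0 := by
        rw [hn, sub_ne_zero]
        intro hcon
        have := Nat.cast_injective (R := ℂ) hcon
        omega
      exact mul_ne_zero (mul_ne_zero hγ h1) h2
    · rw [pow_succ', Module.End.mul_apply, hγ2, map_smul, toEnd_apply_apply, hlie]
      rw [show n - (p+1) = n - p - 1 by omega]
      rw [smul_smul]
      ring_nf
  
/-- Main sl₂ lemma : if `v` is primitive of even weight `2m` then `ψ p ⊗ h ∈ S` for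
every `p`. -/
lemma allH [FiniteDimensional ℂ W] {m : ℕ} (hμ : μ = 2*(m:ℂ)) :
    ∀ p : ℕ, (ψ v p) ⊗ₜ[ℂ] h ∈ S := by
  have hn : μ = ((2*m : ℕ):ℂ) := by push_cast; exact hμ
  rcases Nat.eq_zero_or_pos m with hm | hm
  · -- m = 0 : `F v = 0`.
    subst hm
    have hf1 : (ψ v 1) = 0 := by
      have := P.pow_toEnd_f_eq_zero_of_eq_nat (n := 0) (by simpa using hn)
      simpa using this
    intro p
    match p with
    | 0 =>
      refine hS _ _ ?_
      have : ⁅h, v⁆ = 0 := by rw [P.lie_h, hμ]; simp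
      rw [show ((toEnd ℂ 𝔤 W f)^0) v = v from rfl, this, lie_zero]
    | (q+1) =>
      have hfv : (toEnd ℂ 𝔤 W f) v = 0 := by simpa [pow_one] using hf1
      have : (ψ v (q+1)) = 0 := by
        rw [pow_succ, Module.End.mul_apply, hfv, map_zero]
      rw [this, zero_tmul]
      exact S.zero_mem
  · have hm' : m ≠ 0 := by omega
    intro p
    rcases Nat.lt_or_ge p m with hp | hp
    · -- lower half : use the mirrored triple
      set n := 2*m with hndef
      have hvn : (ψ v n) ≠ 0 := P.pow_toEnd_f_ne_zero_of_eq_nat hn (le_refl n)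
      have P' : (t.symm).HasPrimitiveVectorWith (ψ v n) μ := by
        refine ⟨hvn, ?_, ?_⟩
        · have h1 := P.lie_h_pow_toEnd_f n
          rw [neg_lie, h1, hn]
          rw [← neg_smul]
          congr 1
          push_cast
          ring
        · rw [P.lie_f_pow_toEnd_f, P.pow_toEnd_f_eq_zero_of_eq_nat hn]
      have hupper := upperH S hS P' hm' hμ (n - p) (by omega)
      obtain ⟨γ, hγ, hγ2⟩ := epow_bottom S hS P hn (n - p) (by omega)
      rw [hγ2, show n - (n - p) = p by omega] at hupper
      have heq : (γ • ψ v p) ⊗ₜ[ℂ] (-h) = (-γ) • ((ψ v p) ⊗ₜ[ℂ] h) := by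
        rw [tmul_neg, smul_tmul', neg_smul, neg_tmul]
      rw [heq] at hupper
      have := S.smul_mem (-γ)⁻¹ hupper
      rwa [smul_smul, inv_mul_cancel₀ (by simpa using hγ), one_smul] at this
    · exact upperH S hS P hm' hμ p hp

end Chains

section Decomp

variable [FiniteDimensional ℂ W]

lemma lie_h_epow (t : IsSl2Triple h e f) {u : W} {ν : ℂ} (hu : ⁅h, u⁆ = ν • u) (j : ℕ) :
    ⁅h, ((toEnd ℂ 𝔤 W e)^j) u⁆ = (ν + 2*(j:ℂ)) • ((toEnd ℂ 𝔤 W e)^j) u := by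
  induction j with
  | zero => simpa using hu
  | succ j ih =>
    rw [pow_succ', Module.End.mul_apply, toEnd_apply_apply, leibniz_lie,
      t.lie_h_e_smul (R := ℂ), smul_lie, ih, lie_smul]
    push_cast
    module

omit [FiniteDimensional ℂ W] in
lemma epow_succ_lie (u : W) (q : ℕ) :
    ((toEnd ℂ 𝔤 W e)^(q+1)) u = ((toEnd ℂ 𝔤 W e)^q) ⁅e, u⁆ := by
  rw [pow_succ, Module.End.mul_apply, toEnd_apply_apply]

lemma exists_epow_zero (t : IsSl2Triple h e f) {u : W} {ν : ℂ} (hu : ⁅h, u⁆ = ν • u) :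
    ∃ q : ℕ, ((toEnd ℂ 𝔤 W e)^q) u = 0 := by
  by_contra! contra
  have hs : (Set.range fun (q : ℕ) ↦ ν + 2*(q:ℂ)).Infinite := by
    rw [Set.infinite_range_iff (fun q q' hqq ↦ by
      simpa using hqq)]
    infer_instance
  exact hs ((toEnd ℂ 𝔤 W h).eigenvectors_linearIndependent
    {x : ℂ | ∃ q : ℕ, ν + 2*(q:ℂ) = x}
    (fun ⟨s, hs⟩ ↦ ((toEnd ℂ 𝔤 W e)^(Classical.choose hs)) u)
    (fun ⟨r, hr⟩ ↦ by
      simp only [Module.End.hasEigenvector_iff, Module.End.mem_eigenspace_iff,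
        toEnd_apply_apply]
      exact ⟨by rw [lie_h_epow t hu, Classical.choose_spec hr], contra _⟩)).finite

/-- The span of images of powers of `f` applied to primitive vectors of even weight,
organized by the resulting weight `2k`. -/
def primSpan (t : IsSl2Triple h e f) (k : ℕ) : Submodule ℂ W :=
  Submodule.span ℂ {u | ∃ (v : W) (p : ℕ),
    t.HasPrimitiveVectorWith v (((2*k+2*p : ℕ)):ℂ) ∧ u = ((toEnd ℂ 𝔤 W f)^p) v}

lemma primSpan_weight (t : IsSl2Triple h e f) (k : ℕ) {u : W} (hu : u ∈ primSpan t k) :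
    ⁅h, u⁆ = ((2*k:ℕ):ℂ) • u := by
  have hle : primSpan t k ≤ Module.End.eigenspace (toEnd ℂ 𝔤 W h) ((2*k:ℕ):ℂ) := by
    rw [primSpan, Submodule.span_le]
    rintro x ⟨v, p, P, rfl⟩
    rw [SetLike.mem_coe, Module.End.mem_eigenspace_iff, toEnd_apply_apply,
      P.lie_h_pow_toEnd_f]
    congr 1
    push_cast
    ring
  have := hle hu
  rwa [Module.End.mem_eigenspace_iff, toEnd_apply_apply] at this

lemma primSpan_lift (t : IsSl2Triple h e f) (k : ℕ) {x : W} (hx : x ∈ primSpan t (k+1)) :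
    ∃ y ∈ primSpan t k, ⁅e, y⁆ = x := by
  induction hx using Submodule.span_induction with
  | mem x hx =>
    obtain ⟨v, p, P, rfl⟩ := hx
    set c : ℂ := ((p:ℂ)+1) * (((2*(k+1)+2*p : ℕ):ℂ) - (p:ℂ)) with hc
    have hc0 : c ≠ 0 := by
      have h1 : ((p:ℂ)+1) ≠ 0 := by
        have := Nat.cast_add_one_ne_zero (R := ℂ) p
        simpa using this
      have h2 : (((2*(k+1)+2*p : ℕ):ℂ) - (p:ℂ)) = ((2*k+2+p : ℕ):ℂ) := by
        push_cast; ring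
      rw [hc, h2]
      exact mul_ne_zero h1 (Nat.cast_ne_zero.mpr (by omega))
    have P' : t.HasPrimitiveVectorWith v (((2*k+2*(p+1) : ℕ)):ℂ) := by
      convert P using 2
      omega
    refine ⟨c⁻¹ • ((toEnd ℂ 𝔤 W f)^(p+1)) v, ?_, ?_⟩
    · exact Submodule.smul_mem _ _ (Submodule.subset_span ⟨v, p+1, P', rfl⟩)
    · rw [lie_smul, P.lie_e_pow_succ_toEnd_f p, smul_smul, inv_mul_cancel₀ hc0, one_smul]
  | zero => exact ⟨0, Submodule.zero_mem _, lie_zero e⟩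
  | add x y _ _ ihx ihy =>
    obtain ⟨a, ha, ha'⟩ := ihx
    obtain ⟨b, hb, hb'⟩ := ihy
    exact ⟨a + b, Submodule.add_mem _ ha hb, by rw [lie_add, ha', hb']⟩
  | smul c x _ ihx =>
    obtain ⟨a, ha, ha'⟩ := ihx
    exact ⟨c • a, Submodule.smul_mem _ _ ha, by rw [lie_smul, ha']⟩

lemma mem_primSpan (t : IsSl2Triple h e f) :
    ∀ (q k : ℕ) (u : W), ⁅h, u⁆ = ((2*k:ℕ):ℂ) • u → ((toEnd ℂ 𝔤 W e)^q) u = 0 →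
      u ∈ primSpan t k := by
  intro q
  induction q with
  | zero =>
    intro k u _ h0
    rw [pow_zero, Module.End.one_apply] at h0
    rw [h0]
    exact Submodule.zero_mem _
  | succ q ih =>
    intro k u hu h0
    have hu' : ⁅h, ⁅e, u⁆⁆ = ((2*(k+1):ℕ):ℂ) • ⁅e, u⁆ := by
      rw [leibniz_lie, t.lie_h_e_smul (R := ℂ), smul_lie, hu, lie_smul]
      push_cast
      module
    rw [epow_succ_lie] at h0
    have hEu := ih (k+1) ⁅e, u⁆ hu' h0
    obtain ⟨y, hy, hy'⟩ := primSpan_lift t k hEu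
    by_cases hz : u - y = 0
    · rw [sub_eq_zero] at hz
      rwa [hz]
    · have P0 : t.HasPrimitiveVectorWith (u - y) (((2*k+2*0 : ℕ)):ℂ) := by
        refine ⟨hz, ?_, ?_⟩
        · rw [lie_sub, hu, primSpan_weight t k hy, ← smul_sub]
          norm_num
        · rw [lie_sub, hy', sub_self]
      have huy : u = (u - y) + y := by abel
      rw [huy]
      exact Submodule.add_mem _ (Submodule.subset_span ⟨u - y, 0, P0, by simp⟩) hy

variable (S : LieSubmodule ℂ 𝔤 (W ⊗[ℂ] 𝔤)) in
lemma tensor_h_mem_nat (t : IsSl2Triple h e f)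
    (hS : ∀ (u : W) (x : 𝔤), ⁅x, ⁅x, u⁆⁆ = (0:W) → u ⊗ₜ[ℂ] x ∈ S)
    (u : W) (k : ℕ) (hu : ⁅h, u⁆ = ((2*k:ℕ):ℂ) • u) : u ⊗ₜ[ℂ] h ∈ S := by
  obtain ⟨q, hq⟩ := exists_epow_zero t hu
  have hmem := mem_primSpan t q k u hu hq
  clear hq hu
  induction hmem using Submodule.span_induction with
  | mem x hx =>
    obtain ⟨v, p, P, rfl⟩ := hx
    exact allH S hS P (m := k + p) (by push_cast; ring) p
  | zero => rw [zero_tmul]; exact S.zero_mem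
  | add x y _ _ ihx ihy => rw [add_tmul]; exact add_mem ihx ihy
  | smul c x _ ihx => rw [← smul_tmul']; exact S.smul_mem c ihx

variable (S : LieSubmodule ℂ 𝔤 (W ⊗[ℂ] 𝔤)) in
lemma tensor_h_mem_int (t : IsSl2Triple h e f)
    (hS : ∀ (u : W) (x : 𝔤), ⁅x, ⁅x, u⁆⁆ = (0:W) → u ⊗ₜ[ℂ] x ∈ S)
    (u : W) (k : ℤ) (hu : ⁅h, u⁆ = (2*(k:ℂ)) • u) : u ⊗ₜ[ℂ] h ∈ S := by
  rcases le_or_gt 0 k with hk | hk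
  · refine tensor_h_mem_nat S t hS u k.toNat ?_
    have hcast : ((k.toNat:ℕ):ℂ) = (k:ℂ) := by
      exact_mod_cast congrArg (Int.cast (R := ℂ)) (Int.toNat_of_nonneg hk)
    rw [hu]
    congr 1
    rw [Nat.cast_mul, hcast]
    push_cast
    ring
  · have hu' : ⁅-h, u⁆ = ((2*(-k).toNat:ℕ):ℂ) • u := by
      have hcast : (((-k).toNat:ℕ):ℂ) = -(k:ℂ) := by
        exact_mod_cast congrArg (Int.cast (R := ℂ))
          (Int.toNat_of_nonneg (by omega : (0:ℤ) ≤ -k))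
      rw [neg_lie, hu, ← neg_smul]
      congr 1
      rw [Nat.cast_mul, hcast]
      push_cast
      ring
    have := tensor_h_mem_nat S t.symm hS u (-k).toNat hu'
    have heq : u ⊗ₜ[ℂ] h = -(u ⊗ₜ[ℂ] (-h)) := by rw [tmul_neg, neg_neg]
    rw [heq]
    exact neg_mem this

end Decomp

end OvershearAux


/-- **Lemma (Tóth–Varolin).**  Let `𝔤` be a finite-dimensional complex semisimple Lie algebra
with Cartan subalgebra `𝔥`, and `W` a finite-dimensional `𝔤`-module.  Let `λ` be a weight of
`W` relative to `𝔥`.  Suppose `α` is a root of `(𝔤,𝔥)`, with root vectors `e ∈ 𝔤_α`,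
`f ∈ 𝔤_{−α}`, whose coroot `H_α ∈ 𝔥` (so `⁅e,f⁆ = H_α` and `α(H_α) = 2`) satisfies that
`λ(H_α)` is a nonzero even integer.  Then `W_λ ⊗ 𝔥` is contained in the Lie submodule of
`W ⊗ 𝔤` generated by the `𝔤`-overshears. -/
theorem weightSpace_tensor_cartan_mem_overshear_span
    {𝔤 : Type} [LieRing 𝔤] [LieAlgebra ℂ 𝔤] [FiniteDimensional ℂ 𝔤]
    [LieAlgebra.IsSemisimple ℂ 𝔤]
    (𝔥 : LieSubalgebra ℂ 𝔤) [𝔥.IsCartanSubalgebra]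
    {W : Type} [AddCommGroup W] [Module ℂ W] [LieRingModule 𝔤 W] [LieModule ℂ 𝔤 W]
    [FiniteDimensional ℂ W]
    (lam : 𝔥 →ₗ[ℂ] ℂ)
    (hweight : ∃ w : W, w ≠ 0 ∧ ∀ h : 𝔥, ⁅(h : 𝔤), w⁆ = lam h • w)
    (α : 𝔥 →ₗ[ℂ] ℂ) (hα : α ≠ 0)
    (e f : 𝔤) (he : e ≠ 0) (hf : f ≠ 0)
    (heα : ∀ h : 𝔥, ⁅(h : 𝔤), e⁆ = α h • e)
    (hfα : ∀ h : 𝔥, ⁅(h : 𝔤), f⁆ = -α h • f)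
    (Hα : 𝔥) (hef : ⁅e, f⁆ = (Hα : 𝔤)) (hα2 : α Hα = 2)
    (hk : ∃ k : ℤ, k ≠ 0 ∧ lam Hα = 2 * (k : ℂ)) :
    ∀ w : W, (∀ h : 𝔥, ⁅(h : 𝔤), w⁆ = lam h • w) →
      ∀ h : 𝔥, w ⊗ₜ[ℂ] (h : 𝔤) ∈ LieSubmodule.lieSpan ℂ 𝔤
        {z : W ⊗[ℂ] 𝔤 | ∃ (u : W) (x : 𝔤), z = u ⊗ₜ[ℂ] x ∧ ⁅x, ⁅x, u⁆⁆ = (0 : W)} := by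
  intro w hw h
  obtain ⟨k, hk0, hlam⟩ := hk
  obtain ⟨w₀, hw₀ne, hw₀⟩ := hweight
  have h2k : (2*(k:ℂ)) ≠ 0 := by
    refine mul_ne_zero two_ne_zero ?_
    exact_mod_cast hk0
  have hHne : (Hα : 𝔤) ≠ 0 := by
    intro hcon
    have h1 := hw₀ Hα
    rw [hcon, zero_lie] at h1
    rcases smul_eq_zero.mp h1.symm with h2 | h2
    · rw [hlam] at h2
      exact h2k h2
    · exact hw₀ne h2
  have t : IsSl2Triple (Hα : 𝔤) e f := by
    refine ⟨hHne, hef, ?_, ?_⟩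
    · rw [heα Hα, hα2, two_smul, two_smul]
    · rw [hfα Hα, hα2, neg_smul, two_smul, two_smul]
  set S : LieSubmodule ℂ 𝔤 (W ⊗[ℂ] 𝔤) := LieSubmodule.lieSpan ℂ 𝔤
    {z : W ⊗[ℂ] 𝔤 | ∃ (u : W) (x : 𝔤), z = u ⊗ₜ[ℂ] x ∧ ⁅x, ⁅x, u⁆⁆ = (0 : W)} with hSdef
  have hS : ∀ (u : W) (x : 𝔤), ⁅x, ⁅x, u⁆⁆ = (0:W) → u ⊗ₜ[ℂ] x ∈ S := fun u x hx =>
    LieSubmodule.subset_lieSpan ⟨u, x, rfl, hx⟩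
  set c : ℂ := lam h / (2*(k:ℂ)) with hcdef
  set h₀ : 𝔥 := h - c • Hα with hh₀
  have hlam₀ : lam h₀ = 0 := by
    rw [hh₀, map_sub, map_smul, hlam, smul_eq_mul, hcdef]
    field_simp
    ring
  have hcoe : (h : 𝔤) = (h₀ : 𝔤) + c • (Hα : 𝔤) := by
    rw [hh₀]
    have : ((c • Hα : 𝔥) : 𝔤) = c • (Hα : 𝔤) := rfl
    rw [AddSubgroupClass.coe_sub, this]
    abel
  rw [hcoe, tmul_add, tmul_smul]
  refine add_mem ?_ (S.smul_mem c ?_)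
  · refine hS w (h₀ : 𝔤) ?_
    rw [hw h₀, lie_smul, hw h₀, hlam₀]
    simp
  · refine OvershearAux.tensor_h_mem_int S t hS w k ?_
    rw [hw Hα, hlam]
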